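/- The 4-dimensional Lebesgue measure of the set of (p_0,p_1,p_2,p_3) ∈ [0,1]^4 satisfying max(|1/4 + (1/2)(p_0 − p_1)|, |1/4 + (1/2)(p_2 − p_3)|) + max(|1/4 + (1/2)(p_0 − p_2)|, |1/4 + (1/2)(p_1 − p_3)|) < 1 equals 5/6. (This is the volume of the parameter region where the ergodicity condition of Theorem 1 holds with γ = 1/2.) -/

import Mathlib

open MeasureTheory Set

theorem vol_tri (t : ℝ) (ht1 : t ≤ 1) :
    volume {q : ℝ × ℝ | q.1 ∈ Icc (0:ℝ) 1 ∧ q.2 ∈ Icc (0:ℝ) 1 ∧ q.1 + q.2 ≤ t} =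
      ENNReal.ofReal ((max t 0)^2 / 2) := by
  have hm : MeasurableSet {q : ℝ × ℝ | q.1 ∈ Icc (0:ℝ) 1 ∧ q.2 ∈ Icc (0:ℝ) 1 ∧ q.1 + q.2 ≤ t} := by
    refine (measurableSet_Icc.preimage measurable_fst).inter
      ((measurableSet_Icc.preimage measurable_snd).inter ?_)
    exact measurableSet_le (measurable_fst.add measurable_snd) measurable_const
  rw [Measure.volume_eq_prod, Measure.prod_apply hm]
  have hslice : ∀ y : ℝ, volume (Prod.mk y ⁻¹' {q : ℝ × ℝ | q.1 ∈ Icc (0:ℝ) 1 ∧ q.2 ∈ Icc (0:ℝ) 1 ∧ q.1 + q.2 ≤ t})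
      = (Icc (0:ℝ) 1).indicator (fun y => ENNReal.ofReal (t - y)) y := by
    intro y
    by_cases hy : y ∈ Icc (0:ℝ) 1
    · rw [indicator_of_mem hy]
      have : (Prod.mk y ⁻¹' {q : ℝ × ℝ | q.1 ∈ Icc (0:ℝ) 1 ∧ q.2 ∈ Icc (0:ℝ) 1 ∧ q.1 + q.2 ≤ t})
          = Icc 0 (min 1 (t - y)) := by
        ext z
        simp only [mem_preimage, mem_setOf_eq, mem_Icc, le_min_iff]
        constructor
        · rintro ⟨_, ⟨hz0, hz1⟩, hzt⟩; exact ⟨hz0, hz1, by linarith⟩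
        · rintro ⟨hz0, hz1, hzt⟩; exact ⟨hy, ⟨hz0, hz1⟩, by linarith⟩
      rw [this, Real.volume_Icc]
      congr 1
      rw [min_eq_right (by linarith [hy.1] : t - y ≤ 1)]
      ring
    · rw [indicator_of_notMem hy]
      have : (Prod.mk y ⁻¹' {q : ℝ × ℝ | q.1 ∈ Icc (0:ℝ) 1 ∧ q.2 ∈ Icc (0:ℝ) 1 ∧ q.1 + q.2 ≤ t}) = ∅ := by
        ext z; simp only [mem_preimage, mem_setOf_eq, mem_empty_iff_false, iff_false]
        rintro ⟨h, _, _⟩; exact hy h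
      rw [this, measure_empty]
  simp_rw [hslice]
  rw [lintegral_indicator measurableSet_Icc]
  rcases le_or_gt t 0 with ht0 | ht0
  · rw [setLIntegral_congr_fun measurableSet_Icc
      (fun y hy => ?_), lintegral_zero]
    · rw [max_eq_right ht0]
      norm_num
    · show ENNReal.ofReal (t - y) = 0
      rw [ENNReal.ofReal_eq_zero]
      linarith [hy.1]
  · rw [max_eq_left ht0.le]
    rw [show Icc (0:ℝ) 1 = Icc 0 t ∪ Ioc t 1 from (Icc_union_Ioc_eq_Icc ht0.le ht1).symm]
    rw [lintegral_union measurableSet_Ioc ((Iic_disjoint_Ioc le_rfl).mono Icc_subset_Iic_self le_rfl)]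
    have h2 : ∫⁻ y in Ioc t 1, ENNReal.ofReal (t - y) = 0 := by
      rw [setLIntegral_congr_fun measurableSet_Ioc
        (fun y hy => ?_), lintegral_zero]
      show ENNReal.ofReal (t - y) = 0
      rw [ENNReal.ofReal_eq_zero]
      linarith [hy.1]
    rw [h2, add_zero]
    rw [← ofReal_integral_eq_lintegral_ofReal]
    · congr 1
      rw [integral_Icc_eq_integral_Ioc, ← intervalIntegral.integral_of_le ht0.le]
      have key := intervalIntegral.integral_eq_sub_of_hasDerivAt
        (f := fun y : ℝ => t * y - y^2/2) (f' := fun y : ℝ => t - y) (a := 0) (b := t)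
        (fun y _ => by
          have h1 : HasDerivAt (fun y : ℝ => t * y) t y := by
            simpa using (hasDerivAt_id y).const_mul t
          have h2 : HasDerivAt (fun y : ℝ => y^2/2) y y := by
            have := (hasDerivAt_pow 2 y).div_const 2
            simpa using this.congr_deriv (by ring)
          exact h1.sub h2)
        ((continuous_const.sub continuous_id).intervalIntegrable _ _)
      rw [key]; ring
    · exact (continuous_const.sub continuous_id).integrableOn_Icc
    · exact Filter.Eventually.mono (ae_restrict_mem measurableSet_Icc) (fun y hy => by
        simp only [Pi.zero_apply]; linarith [hy.2])

theorem vol_S3 :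
    volume {q : ℝ × ℝ × ℝ | q.1 ∈ Icc (0:ℝ) 1 ∧ q.2.1 ∈ Icc (0:ℝ) 1 ∧ q.2.2 ∈ Icc (0:ℝ) 1 ∧
      q.2.1 + q.2.2 ≤ 2 * q.1 - 1} = ENNReal.ofReal (1/12) := by
  have hm : MeasurableSet {q : ℝ × ℝ × ℝ | q.1 ∈ Icc (0:ℝ) 1 ∧ q.2.1 ∈ Icc (0:ℝ) 1 ∧
      q.2.2 ∈ Icc (0:ℝ) 1 ∧ q.2.1 + q.2.2 ≤ 2 * q.1 - 1} := by
    refine (measurableSet_Icc.preimage measurable_fst).inter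
      ((measurableSet_Icc.preimage (measurable_fst.comp measurable_snd)).inter
      ((measurableSet_Icc.preimage (measurable_snd.comp measurable_snd)).inter ?_))
    exact measurableSet_le ((measurable_fst.comp measurable_snd).add (measurable_snd.comp measurable_snd))
      ((measurable_const.mul measurable_fst).sub measurable_const)
  rw [Measure.volume_eq_prod, Measure.prod_apply hm]
  have hslice : ∀ x : ℝ, volume (Prod.mk x ⁻¹' {q : ℝ × ℝ × ℝ | q.1 ∈ Icc (0:ℝ) 1 ∧ q.2.1 ∈ Icc (0:ℝ) 1 ∧
      q.2.2 ∈ Icc (0:ℝ) 1 ∧ q.2.1 + q.2.2 ≤ 2 * q.1 - 1})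
      = (Icc (0:ℝ) 1).indicator (fun x => ENNReal.ofReal ((max (2*x-1) 0)^2/2)) x := by
    intro x
    by_cases hx : x ∈ Icc (0:ℝ) 1
    · rw [indicator_of_mem hx]
      have hset : (Prod.mk x ⁻¹' {q : ℝ × ℝ × ℝ | q.1 ∈ Icc (0:ℝ) 1 ∧ q.2.1 ∈ Icc (0:ℝ) 1 ∧
          q.2.2 ∈ Icc (0:ℝ) 1 ∧ q.2.1 + q.2.2 ≤ 2 * q.1 - 1})
          = {q : ℝ × ℝ | q.1 ∈ Icc (0:ℝ) 1 ∧ q.2 ∈ Icc (0:ℝ) 1 ∧ q.1 + q.2 ≤ 2*x-1} := by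
        ext ⟨y, z⟩
        simp only [mem_preimage, mem_setOf_eq]
        exact ⟨fun ⟨_, h2, h3, h4⟩ => ⟨h2, h3, h4⟩, fun ⟨h2, h3, h4⟩ => ⟨hx, h2, h3, h4⟩⟩
      rw [hset, vol_tri (2*x-1) (by linarith [hx.2])]
    · rw [indicator_of_notMem hx]
      have hset : (Prod.mk x ⁻¹' {q : ℝ × ℝ × ℝ | q.1 ∈ Icc (0:ℝ) 1 ∧ q.2.1 ∈ Icc (0:ℝ) 1 ∧
          q.2.2 ∈ Icc (0:ℝ) 1 ∧ q.2.1 + q.2.2 ≤ 2 * q.1 - 1}) = ∅ := by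
        ext ⟨y, z⟩
        simp only [mem_preimage, mem_setOf_eq, mem_empty_iff_false, iff_false]
        rintro ⟨h, _⟩; exact hx h
      rw [hset, measure_empty]
  simp_rw [hslice]
  rw [lintegral_indicator measurableSet_Icc]
  rw [show Icc (0:ℝ) 1 = Ico 0 (1/2) ∪ Icc (1/2) 1 from
    (Ico_union_Icc_eq_Icc (by norm_num) (by norm_num)).symm]
  rw [lintegral_union measurableSet_Icc (by rw [Set.disjoint_left]; rintro x hx1 hx2; exact absurd hx2.1 (not_le.2 hx1.2))]
  have h1 : ∫⁻ x in Ico (0:ℝ) (1/2), ENNReal.ofReal ((max (2*x-1) 0)^2/2) = 0 := by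
    rw [setLIntegral_congr_fun measurableSet_Ico
      (fun x hx => ?_), lintegral_zero]
    show ENNReal.ofReal ((max (2*x-1) 0)^2/2) = 0
    rw [max_eq_right (by linarith [hx.2] : 2*x-1 ≤ 0)]
    norm_num
  rw [h1, zero_add]
  have h2 : ∀ x ∈ Icc (1/2:ℝ) 1, ENNReal.ofReal ((max (2*x-1) 0)^2/2) = ENNReal.ofReal ((2*x-1)^2/2) := by
    intro x hx
    rw [max_eq_left (by linarith [hx.1] : (0:ℝ) ≤ 2*x-1)]
  rw [setLIntegral_congr_fun measurableSet_Icc h2]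
  rw [← ofReal_integral_eq_lintegral_ofReal]
  · congr 1
    rw [integral_Icc_eq_integral_Ioc, ← intervalIntegral.integral_of_le (by norm_num : (1/2:ℝ) ≤ 1)]
    have key := intervalIntegral.integral_eq_sub_of_hasDerivAt
      (f := fun x : ℝ => (2*x-1)^3/12) (f' := fun x : ℝ => (2*x-1)^2/2) (a := 1/2) (b := 1)
      (fun x _ => by
        have h1 : HasDerivAt (fun x : ℝ => 2*x-1) 2 x := by
          simpa using ((hasDerivAt_id x).const_mul 2).sub_const 1
        have := (h1.pow 3).div_const 12
        simpa using this.congr_deriv (by ring))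
      (Continuous.intervalIntegrable (by fun_prop) _ _)
    rw [key]; norm_num
  · exact Continuous.integrableOn_Icc (by fun_prop)
  · exact Filter.Eventually.of_forall (fun x => by positivity)

theorem mS3 : MeasurableSet {q : ℝ × ℝ × ℝ | q.1 ∈ Icc (0:ℝ) 1 ∧ q.2.1 ∈ Icc (0:ℝ) 1 ∧
    q.2.2 ∈ Icc (0:ℝ) 1 ∧ q.2.1 + q.2.2 ≤ 2 * q.1 - 1} := by
  refine (measurableSet_Icc.preimage measurable_fst).inter
    ((measurableSet_Icc.preimage (measurable_fst.comp measurable_snd)).inter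
    ((measurableSet_Icc.preimage (measurable_snd.comp measurable_snd)).inter ?_))
  exact measurableSet_le ((measurable_fst.comp measurable_snd).add (measurable_snd.comp measurable_snd))
    ((measurable_const.mul measurable_fst).sub measurable_const)

theorem vol_S3' :
    volume {q : ℝ × ℝ × ℝ | q.1 ∈ Icc (0:ℝ) 1 ∧ q.2.1 ∈ Icc (0:ℝ) 1 ∧ q.2.2 ∈ Icc (0:ℝ) 1 ∧
      1 + 2 * q.1 ≤ q.2.1 + q.2.2} = ENNReal.ofReal (1/12) := by
  have hmp : MeasurePreserving
      (Prod.map (fun t : ℝ => 1 - t) (Prod.map (fun t : ℝ => 1 - t) (fun t : ℝ => 1 - t)))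
      volume volume := by
    have h := (Measure.measurePreserving_sub_left (volume : Measure ℝ) 1).prod
      ((Measure.measurePreserving_sub_left (volume : Measure ℝ) 1).prod
        (Measure.measurePreserving_sub_left (volume : Measure ℝ) 1))
    simpa [← Measure.volume_eq_prod] using h
  have hpre : (Prod.map (fun t : ℝ => 1 - t) (Prod.map (fun t : ℝ => 1 - t) (fun t : ℝ => 1 - t))) ⁻¹'
      {q : ℝ × ℝ × ℝ | q.1 ∈ Icc (0:ℝ) 1 ∧ q.2.1 ∈ Icc (0:ℝ) 1 ∧ q.2.2 ∈ Icc (0:ℝ) 1 ∧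
        q.2.1 + q.2.2 ≤ 2 * q.1 - 1}
      = {q : ℝ × ℝ × ℝ | q.1 ∈ Icc (0:ℝ) 1 ∧ q.2.1 ∈ Icc (0:ℝ) 1 ∧ q.2.2 ∈ Icc (0:ℝ) 1 ∧
        1 + 2 * q.1 ≤ q.2.1 + q.2.2} := by
    ext ⟨x, y, z⟩
    simp only [mem_preimage, Prod.map_apply, mem_setOf_eq, mem_Icc]
    constructor
    · rintro ⟨⟨a1, a2⟩, ⟨b1, b2⟩, ⟨c1, c2⟩, d⟩
      exact ⟨⟨by linarith, by linarith⟩, ⟨by linarith, by linarith⟩, ⟨by linarith, by linarith⟩, by linarith⟩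
    · rintro ⟨⟨a1, a2⟩, ⟨b1, b2⟩, ⟨c1, c2⟩, d⟩
      exact ⟨⟨by linarith, by linarith⟩, ⟨by linarith, by linarith⟩, ⟨by linarith, by linarith⟩, by linarith⟩
  rw [← vol_S3, ← hmp.measure_preimage mS3.nullMeasurableSet, hpre]

theorem mS3' : MeasurableSet {q : ℝ × ℝ × ℝ | q.1 ∈ Icc (0:ℝ) 1 ∧ q.2.1 ∈ Icc (0:ℝ) 1 ∧
    q.2.2 ∈ Icc (0:ℝ) 1 ∧ 1 + 2 * q.1 ≤ q.2.1 + q.2.2} := by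
  refine (measurableSet_Icc.preimage measurable_fst).inter
    ((measurableSet_Icc.preimage (measurable_fst.comp measurable_snd)).inter
    ((measurableSet_Icc.preimage (measurable_snd.comp measurable_snd)).inter ?_))
  exact measurableSet_le (measurable_const.add (measurable_const.mul measurable_fst))
    ((measurable_fst.comp measurable_snd).add (measurable_snd.comp measurable_snd))

theorem mpPhi1 : MeasurePreserving (fun p : Fin 4 → ℝ => (p 3, (p 0, (p 1, p 2)))) volume volume := by
  have h1 := volume_preserving_piFinSuccAbove (fun _ : Fin 4 => ℝ) 3
  have h2 := (MeasurePreserving.id (volume : Measure ℝ)).prod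
    (volume_preserving_piFinSuccAbove (fun _ : Fin 3 => ℝ) 0)
  have h3 := (MeasurePreserving.id (volume : Measure ℝ)).prod
    ((MeasurePreserving.id (volume : Measure ℝ)).prod (volume_preserving_finTwoArrow ℝ))
  have h := (h3.comp h2).comp h1
  have hfun : ((Prod.map (id : ℝ → ℝ) (Prod.map (id : ℝ → ℝ) (MeasurableEquiv.finTwoArrow (α := ℝ))) ∘
      (Prod.map (id : ℝ → ℝ) (MeasurableEquiv.piFinSuccAbove (fun _ : Fin 3 => ℝ) 0))) ∘
      (MeasurableEquiv.piFinSuccAbove (fun _ : Fin 4 => ℝ) 3))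
      = fun p : Fin 4 → ℝ => (p 3, (p 0, (p 1, p 2))) := by
    funext p; rfl
  rw [hfun] at h
  simpa [← Measure.volume_eq_prod] using h

theorem mpPhi2 : MeasurePreserving (fun p : Fin 4 → ℝ => (p 0, (p 3, (p 1, p 2)))) volume volume := by
  have h1 := volume_preserving_piFinSuccAbove (fun _ : Fin 4 => ℝ) 0
  have h2 := (MeasurePreserving.id (volume : Measure ℝ)).prod
    (volume_preserving_piFinSuccAbove (fun _ : Fin 3 => ℝ) 2)
  have h3 := (MeasurePreserving.id (volume : Measure ℝ)).prod
    ((MeasurePreserving.id (volume : Measure ℝ)).prod (volume_preserving_finTwoArrow ℝ))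
  have h := (h3.comp h2).comp h1
  have hfun : ((Prod.map (id : ℝ → ℝ) (Prod.map (id : ℝ → ℝ) (MeasurableEquiv.finTwoArrow (α := ℝ))) ∘
      (Prod.map (id : ℝ → ℝ) (MeasurableEquiv.piFinSuccAbove (fun _ : Fin 3 => ℝ) 2))) ∘
      (MeasurableEquiv.piFinSuccAbove (fun _ : Fin 4 => ℝ) 0))
      = fun p : Fin 4 → ℝ => (p 0, (p 3, (p 1, p 2))) := by
    funext p; rfl
  rw [hfun] at h
  simpa [← Measure.volume_eq_prod] using h

theorem vol_A : volume {p : Fin 4 → ℝ | (∀ i, p i ∈ Icc (0:ℝ) 1) ∧ 1 ≤ 2 * p 0 - p 1 - p 2}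
    = ENNReal.ofReal (1/12) := by
  have hset : {p : Fin 4 → ℝ | (∀ i, p i ∈ Icc (0:ℝ) 1) ∧ 1 ≤ 2 * p 0 - p 1 - p 2}
      = (fun p : Fin 4 → ℝ => (p 3, (p 0, (p 1, p 2)))) ⁻¹'
        (Icc (0:ℝ) 1 ×ˢ {q : ℝ × ℝ × ℝ | q.1 ∈ Icc (0:ℝ) 1 ∧ q.2.1 ∈ Icc (0:ℝ) 1 ∧
          q.2.2 ∈ Icc (0:ℝ) 1 ∧ q.2.1 + q.2.2 ≤ 2 * q.1 - 1}) := by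
    ext p
    simp only [mem_setOf_eq, mem_preimage, mem_prod]
    constructor
    · rintro ⟨hc, h⟩
      exact ⟨hc 3, hc 0, hc 1, hc 2, by linarith⟩
    · rintro ⟨h3, h0, h1, h2, h⟩
      refine ⟨fun i => ?_, by linarith⟩
      fin_cases i <;> assumption
  rw [hset, mpPhi1.measure_preimage (measurableSet_Icc.prod mS3).nullMeasurableSet,
    Measure.volume_eq_prod, Measure.prod_prod, Real.volume_Icc, vol_S3]
  simp

theorem vol_B : volume {p : Fin 4 → ℝ | (∀ i, p i ∈ Icc (0:ℝ) 1) ∧ 1 + 2 * p 3 ≤ p 1 + p 2}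
    = ENNReal.ofReal (1/12) := by
  have hset : {p : Fin 4 → ℝ | (∀ i, p i ∈ Icc (0:ℝ) 1) ∧ 1 + 2 * p 3 ≤ p 1 + p 2}
      = (fun p : Fin 4 → ℝ => (p 0, (p 3, (p 1, p 2)))) ⁻¹'
        (Icc (0:ℝ) 1 ×ˢ {q : ℝ × ℝ × ℝ | q.1 ∈ Icc (0:ℝ) 1 ∧ q.2.1 ∈ Icc (0:ℝ) 1 ∧
          q.2.2 ∈ Icc (0:ℝ) 1 ∧ 1 + 2 * q.1 ≤ q.2.1 + q.2.2}) := by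
    ext p
    simp only [mem_setOf_eq, mem_preimage, mem_prod]
    constructor
    · rintro ⟨hc, h⟩
      exact ⟨hc 0, hc 3, hc 1, hc 2, by linarith⟩
    · rintro ⟨h0, h3, h1, h2, h⟩
      refine ⟨fun i => ?_, by linarith⟩
      fin_cases i <;> assumption
  rw [hset, mpPhi2.measure_preimage (measurableSet_Icc.prod mS3').nullMeasurableSet,
    Measure.volume_eq_prod, Measure.prod_prod, Real.volume_Icc, vol_S3']
  simp

theorem hplane (i : Fin 4) (c : ℝ) : volume {p : Fin 4 → ℝ | p i = c} = 0 := by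
  have hset : {p : Fin 4 → ℝ | p i = c} = Set.pi univ (fun j => if j = i then {c} else univ) := by
    ext p
    simp only [mem_setOf_eq, Set.mem_pi, mem_univ, forall_true_left]
    constructor
    · intro h j
      by_cases hj : j = i
      · subst hj; simp [h]
      · simp [hj]
    · intro h
      have := h i
      simpa using this
  rw [hset, volume_pi_pi]
  exact Finset.prod_eq_zero (Finset.mem_univ i) (by simp)

theorem pair_arith (s t : ℝ) (hs : -1 ≤ s) (hs1 : s ≤ 1) (ht : -1 ≤ t) (ht1 : t ≤ 1)
    (h : 1 ≤ |1 / 4 + 1 / 2 * s| + |1 / 4 + 1 / 2 * t|) :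
    1 ≤ s + t ∨ s ≤ -1 ∨ t ≤ -1 := by
  rcases abs_cases (1 / 4 + 1 / 2 * s) with ⟨f1, g1⟩ | ⟨f1, g1⟩ <;>
  rcases abs_cases (1 / 4 + 1 / 2 * t) with ⟨f2, g2⟩ | ⟨f2, g2⟩ <;>
  rw [f1, f2] at h
  · exact Or.inl (by linarith)
  · exact Or.inr (Or.inr (by linarith))
  · exact Or.inr (Or.inl (by linarith))
  · exact Or.inr (Or.inl (by linarith))

set_option maxHeartbeats 1000000 in
theorem key_arith (x0 x1 x2 x3 : ℝ)
    (h00 : 0 ≤ x0) (h01 : x0 ≤ 1) (h10 : 0 ≤ x1) (h11 : x1 ≤ 1)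
    (h20 : 0 ≤ x2) (h21 : x2 ≤ 1) (h30 : 0 ≤ x3) (h31 : x3 ≤ 1)
    (h : 1 ≤ max |1 / 4 + 1 / 2 * (x0 - x1)| |1 / 4 + 1 / 2 * (x2 - x3)| +
      max |1 / 4 + 1 / 2 * (x0 - x2)| |1 / 4 + 1 / 2 * (x1 - x3)|) :
    1 ≤ 2 * x0 - x1 - x2 ∨ 1 + 2 * x3 ≤ x1 + x2 ∨ x0 = 1 ∨ x1 = 1 ∨ x2 = 1 ∨ x3 = 1 := by
  rcases max_cases |1 / 4 + 1 / 2 * (x0 - x1)| |1 / 4 + 1 / 2 * (x2 - x3)| with ⟨e1, _⟩ | ⟨e1, _⟩ <;>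
    rcases max_cases |1 / 4 + 1 / 2 * (x0 - x2)| |1 / 4 + 1 / 2 * (x1 - x3)| with ⟨e2, _⟩ | ⟨e2, _⟩ <;>
    rw [e1, e2] at h
  · rcases pair_arith (x0 - x1) (x0 - x2) (by linarith) (by linarith) (by linarith) (by linarith) h
      with h' | h' | h'
    · exact Or.inl (by linarith)
    · exact Or.inr (Or.inr (Or.inr (Or.inl (by linarith))))
    · exact Or.inr (Or.inr (Or.inr (Or.inr (Or.inl (by linarith)))))
  · rcases pair_arith (x0 - x1) (x1 - x3) (by linarith) (by linarith) (by linarith) (by linarith) h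
      with h' | h' | h'
    · exact Or.inr (Or.inr (Or.inl (by linarith)))
    · exact Or.inr (Or.inr (Or.inr (Or.inl (by linarith))))
    · exact Or.inr (Or.inr (Or.inr (Or.inr (Or.inr (by linarith)))))
  · rcases pair_arith (x2 - x3) (x0 - x2) (by linarith) (by linarith) (by linarith) (by linarith) h
      with h' | h' | h'
    · exact Or.inr (Or.inr (Or.inl (by linarith)))
    · exact Or.inr (Or.inr (Or.inr (Or.inr (Or.inr (by linarith)))))
    · exact Or.inr (Or.inr (Or.inr (Or.inr (Or.inl (by linarith)))))
  · rcases pair_arith (x2 - x3) (x1 - x3) (by linarith) (by linarith) (by linarith) (by linarith) h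
      with h' | h' | h'
    · exact Or.inr (Or.inl (by linarith))
    · exact Or.inr (Or.inr (Or.inr (Or.inr (Or.inr (by linarith)))))
    · exact Or.inr (Or.inr (Or.inr (Or.inr (Or.inr (by linarith)))))

theorem volume_ergodicity_region_four_params :
    volume {p : Fin 4 → ℝ | (∀ i, p i ∈ Set.Icc (0 : ℝ) 1) ∧
      max |1 / 4 + (1 / 2) * (p 0 - p 1)| |1 / 4 + (1 / 2) * (p 2 - p 3)| +
        max |1 / 4 + (1 / 2) * (p 0 - p 2)| |1 / 4 + (1 / 2) * (p 1 - p 3)| < 1} =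
      5 / 6 := by
  set g : (Fin 4 → ℝ) → ℝ := fun p =>
    max |1 / 4 + (1 / 2) * (p 0 - p 1)| |1 / 4 + (1 / 2) * (p 2 - p 3)| +
      max |1 / 4 + (1 / 2) * (p 0 - p 2)| |1 / 4 + (1 / 2) * (p 1 - p 3)| with hg
  set S : Set (Fin 4 → ℝ) := {p | (∀ i, p i ∈ Set.Icc (0 : ℝ) 1) ∧ g p < 1} with hS
  set F : Set (Fin 4 → ℝ) := {p | (∀ i, p i ∈ Set.Icc (0 : ℝ) 1) ∧ 1 ≤ g p} with hF
  set A : Set (Fin 4 → ℝ) := {p | (∀ i, p i ∈ Icc (0:ℝ) 1) ∧ 1 ≤ 2 * p 0 - p 1 - p 2} with hA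
  set B : Set (Fin 4 → ℝ) := {p | (∀ i, p i ∈ Icc (0:ℝ) 1) ∧ 1 + 2 * p 3 ≤ p 1 + p 2} with hB
  have mg : Measurable g := by
    rw [hg]; fun_prop
  have mcube : MeasurableSet {p : Fin 4 → ℝ | ∀ i, p i ∈ Icc (0:ℝ) 1} := by
    have : {p : Fin 4 → ℝ | ∀ i, p i ∈ Icc (0:ℝ) 1} = Set.pi univ (fun _ => Icc (0:ℝ) 1) := by
      ext p; simp only [mem_setOf_eq, Set.mem_univ_pi]
    rw [this]
    exact MeasurableSet.univ_pi (fun i => measurableSet_Icc)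
  have mF : MeasurableSet F := by
    rw [hF, setOf_and]
    exact mcube.inter (measurableSet_le measurable_const mg)
  have mB : MeasurableSet B := by
    rw [hB, setOf_and]
    exact mcube.inter (measurableSet_le (by fun_prop) (by fun_prop))
  -- cube splits
  have hsplit : {p : Fin 4 → ℝ | ∀ i, p i ∈ Icc (0:ℝ) 1} = S ∪ F := by
    ext p
    simp only [mem_setOf_eq, mem_union, hS, hF]
    constructor
    · intro hc
      rcases lt_or_ge (g p) 1 with h | h
      · exact Or.inl ⟨hc, h⟩
      · exact Or.inr ⟨hc, h⟩
    · rintro (⟨hc, _⟩ | ⟨hc, _⟩) <;> exact hc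
  have hdisj : Disjoint S F := by
    rw [Set.disjoint_left]
    rintro p ⟨_, h1⟩ ⟨_, h2⟩
    exact absurd h2 (not_le.2 h1)
  have hvolcube : volume {p : Fin 4 → ℝ | ∀ i, p i ∈ Icc (0:ℝ) 1} = 1 := by
    have : {p : Fin 4 → ℝ | ∀ i, p i ∈ Icc (0:ℝ) 1} = Set.pi univ (fun _ => Icc (0:ℝ) 1) := by
      ext p; simp only [mem_setOf_eq, Set.mem_univ_pi]
    rw [this, volume_pi_pi]
    simp [Real.volume_Icc]
  have hsum : volume S + volume F = 1 := by
    rw [← measure_union hdisj mF, ← hsplit, hvolcube]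
  -- F has volume 1/6
  have hsub1 : A ∪ B ⊆ F := by
    rintro p (⟨hc, h⟩ | ⟨hc, h⟩) <;> refine ⟨hc, ?_⟩
    · have l1 := le_abs_self (1 / 4 + (1 / 2) * (p 0 - p 1))
      have l2 := le_abs_self (1 / 4 + (1 / 2) * (p 0 - p 2))
      have l3 := le_max_left |1 / 4 + (1 / 2) * (p 0 - p 1)| |1 / 4 + (1 / 2) * (p 2 - p 3)|
      have l4 := le_max_left |1 / 4 + (1 / 2) * (p 0 - p 2)| |1 / 4 + (1 / 2) * (p 1 - p 3)|
      rw [hg]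
      dsimp only
      linarith
    · have l1 := le_abs_self (1 / 4 + (1 / 2) * (p 2 - p 3))
      have l2 := le_abs_self (1 / 4 + (1 / 2) * (p 1 - p 3))
      have l3 := le_max_right |1 / 4 + (1 / 2) * (p 0 - p 1)| |1 / 4 + (1 / 2) * (p 2 - p 3)|
      have l4 := le_max_right |1 / 4 + (1 / 2) * (p 0 - p 2)| |1 / 4 + (1 / 2) * (p 1 - p 3)|
      rw [hg]
      dsimp only
      linarith
  set N : Set (Fin 4 → ℝ) := {p | p 0 = 1} ∪ ({p | p 1 = 1} ∪ ({p | p 2 = 1} ∪ {p | p 3 = 1})) with hN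
  have hNvol : volume N = 0 := by
    rw [hN]
    refine measure_union_null (hplane 0 1) (measure_union_null (hplane 1 1)
      (measure_union_null (hplane 2 1) (hplane 3 1)))
  have hsub2 : F ⊆ (A ∪ B) ∪ N := by
    rintro p ⟨hc, h⟩
    rcases key_arith (p 0) (p 1) (p 2) (p 3) (hc 0).1 (hc 0).2 (hc 1).1 (hc 1).2
      (hc 2).1 (hc 2).2 (hc 3).1 (hc 3).2 h with h' | h' | h' | h' | h' | h'
    · exact Or.inl (Or.inl ⟨hc, h'⟩)
    · exact Or.inl (Or.inr ⟨hc, h'⟩)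
    · exact Or.inr (Or.inl h')
    · exact Or.inr (Or.inr (Or.inl h'))
    · exact Or.inr (Or.inr (Or.inr (Or.inl h')))
    · exact Or.inr (Or.inr (Or.inr (Or.inr h')))
  have hABint : volume (A ∩ B) = 0 := by
    refine measure_mono_null (fun p hp => ?_) (hplane 0 1)
    obtain ⟨⟨hc, h1⟩, _, h2⟩ := hp
    have := (hc 0).2
    have := (hc 3).1
    show p 0 = 1
    linarith
  have hunionAB : volume (A ∪ B) = ENNReal.ofReal (1/12) + ENNReal.ofReal (1/12) := by
    have h := measure_union_add_inter (μ := volume) A mB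
    rw [hABint, add_zero] at h
    rw [h, vol_A, vol_B]
  have hFvol : volume F = ENNReal.ofReal (1/6) := by
    have le1 : volume F ≤ ENNReal.ofReal (1/6) := by
      calc volume F ≤ volume ((A ∪ B) ∪ N) := measure_mono hsub2
        _ ≤ volume (A ∪ B) + volume N := measure_union_le _ _
        _ = ENNReal.ofReal (1/6) := by
            rw [hNvol, add_zero, hunionAB, ← ENNReal.ofReal_add (by norm_num) (by norm_num)]
            norm_num
    have le2 : ENNReal.ofReal (1/6) ≤ volume F := by
      calc ENNReal.ofReal (1/6) = volume (A ∪ B) := by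
            rw [hunionAB, ← ENNReal.ofReal_add (by norm_num) (by norm_num)]; norm_num
        _ ≤ volume F := measure_mono hsub1
    exact le_antisymm le1 le2
  -- conclude
  have hofr : ENNReal.ofReal (1/6 : ℝ) = 1/6 := by
    rw [ENNReal.ofReal_div_of_pos (by norm_num), ENNReal.ofReal_one, ENNReal.ofReal_ofNat]
  have hsum' : volume S + 1/6 = 1 := by
    rw [← hofr, ← hFvol]; exact hsum
  have h56 : (5/6 : ENNReal) + 1/6 = 1 := by
    rw [ENNReal.div_add_div_same]
    norm_num
    exact ENNReal.div_self (by norm_num) (by norm_num)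
  have := hsum'.trans h56.symm
  exact (ENNReal.add_left_inj (by norm_num)).1 this
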